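/- Fix 0 < r < 1 and let C₂ = 2(r+1)² / (r(1−r)). Then for all ξ ∈ ℝ²_{>0} and all q ∈ (r,1), | ξ̄(q)·e₁ − ξ₁/|ξ|₁ | ≤ C₂ |q − p̄(ξ)|. -/

import Mathlib

noncomputable section

/-- The minimizing parameter `p̄(ξ₁,ξ₂)`. -/
def pbar (r a b : ℝ) : ℝ :=
  (r * (a + b) + (r + 1) * Real.sqrt (r * a * b)) /
    (a + r * b + 2 * Real.sqrt (r * a * b))

/-- The first coordinate of the characteristic direction `ξ̄(q)`. -/
def xibar1 (r q : ℝ) : ℝ :=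
  r * (1 - q) ^ 2 / (q ^ 2 * (r + 1) - 4 * q * r + r * (r + 1))

lemma denom_pos (r x : ℝ) (hr0 : 0 < r) (hx : r < x) (hx1 : x < 1) :
    0 < x ^ 2 * (r + 1) - 4 * x * r + r * (r + 1) := by
  nlinarith [sq_nonneg (x - r), sq_nonneg (1 - x), mul_pos (sub_pos.2 hx) (sub_pos.2 hx1)]

/-- Lipschitz estimate for `xibar1` on `(r,1)`. -/
lemma xibar1_lip (r p q : ℝ) (hr0 : 0 < r) (hr1 : r < 1)
    (hp : p ∈ Set.Ioo r 1) (hq : q ∈ Set.Ioo r 1) :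
    |xibar1 r q - xibar1 r p| ≤ 2 * (r + 1) ^ 2 / (r * (1 - r)) * |q - p| := by
  obtain ⟨hpr, hp1⟩ := hp
  obtain ⟨hqr, hq1⟩ := hq
  have hDp := denom_pos r p hr0 hpr hp1
  have hDq := denom_pos r q hr0 hqr hq1
  have hr1' : 0 < 1 - r := by linarith
  have hB : 0 ≤ (1 - q) * (p - r) + (1 - p) * (q - r) := by nlinarith
  have key : xibar1 r q - xibar1 r p =
      r * (1 - r) * ((1 - q) * (p - r) + (1 - p) * (q - r)) /
        ((q ^ 2 * (r + 1) - 4 * q * r + r * (r + 1)) *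
          (p ^ 2 * (r + 1) - 4 * p * r + r * (r + 1))) * (p - q) := by
    unfold xibar1
    rw [div_sub_div _ _ hDq.ne' hDp.ne', div_mul_eq_mul_div]
    congr 1
    ring
  rw [key, abs_mul, abs_sub_comm p q]
  have hfac : |r * (1 - r) * ((1 - q) * (p - r) + (1 - p) * (q - r)) /
        ((q ^ 2 * (r + 1) - 4 * q * r + r * (r + 1)) *
          (p ^ 2 * (r + 1) - 4 * p * r + r * (r + 1)))| ≤
      2 * (r + 1) ^ 2 / (r * (1 - r)) := by
    rw [abs_of_nonneg (by positivity)]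
    rw [div_le_div_iff₀ (by positivity) (by positivity)]
    have hBle : (1 - q) * (p - r) + (1 - p) * (q - r) ≤ (1 - r) ^ 2 := by nlinarith
    have hDp' : r * (1 - r) ^ 2 ≤ (1 + r) * (p ^ 2 * (r + 1) - 4 * p * r + r * (r + 1)) := by
      nlinarith [sq_nonneg ((1 + r) * p - 2 * r)]
    have hDq' : r * (1 - r) ^ 2 ≤ (1 + r) * (q ^ 2 * (r + 1) - 4 * q * r + r * (r + 1)) := by
      nlinarith [sq_nonneg ((1 + r) * q - 2 * r)]
    nlinarith [mul_le_mul hDp' hDq' (by positivity) (by positivity),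
      mul_le_mul_of_nonneg_left hBle (le_of_lt (mul_pos (mul_pos hr0 hr1') (mul_pos hr0 hr1'))),
      sq_nonneg (r * (1 - r))]
  exact mul_le_mul_of_nonneg_right hfac (abs_nonneg _)

lemma pbar_mem (r a b : ℝ) (hr0 : 0 < r) (hr1 : r < 1) (ha : 0 < a) (hb : 0 < b) :
    pbar r a b ∈ Set.Ioo r 1 := by
  have hrab : (0:ℝ) < r * a * b := by positivity
  set s := Real.sqrt (r * a * b) with hsdef
  have hs0 : 0 < s := Real.sqrt_pos.2 hrab
  have hden : 0 < a + r * b + 2 * s := by positivity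
  have h1r : (0:ℝ) < 1 - r := by linarith
  have hP : pbar r a b = (r * (a + b) + (r + 1) * s) / (a + r * b + 2 * s) := rfl
  constructor
  · rw [hP, lt_div_iff₀ hden]
    nlinarith [mul_pos (mul_pos hr0 hb) h1r, mul_pos hs0 h1r]
  · rw [hP, div_lt_one hden]
    nlinarith [mul_pos ha h1r, mul_pos hs0 h1r]

lemma xibar1_pbar (r a b : ℝ) (hr0 : 0 < r) (hr1 : r < 1) (ha : 0 < a) (hb : 0 < b) :
    xibar1 r (pbar r a b) = a / (a + b) := by
  have hrab : (0:ℝ) < r * a * b := by positivity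
  set s := Real.sqrt (r * a * b) with hsdef
  have hs0 : 0 < s := Real.sqrt_pos.2 hrab
  have hs2 : s ^ 2 = r * a * b := Real.sq_sqrt hrab.le
  have hden : 0 < a + r * b + 2 * s := by positivity
  have hP : pbar r a b = (r * (a + b) + (r + 1) * s) / (a + r * b + 2 * s) := rfl
  obtain ⟨hpr, hp1⟩ := pbar_mem r a b hr0 hr1 ha hb
  set p := pbar r a b with hpdef
  have hD := denom_pos r p hr0 hpr hp1
  have e1 : (1 - p) * (a + r * b + 2 * s) = (1 - r) * (a + s) := by
    rw [hP]; field_simp; ring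
  have e2 : (p - r) * (a + r * b + 2 * s) = (1 - r) * (r * b + s) := by
    rw [hP]; field_simp; ring
  have E1 : ((1 - p) * (a + r * b + 2 * s)) ^ 2 = ((1 - r) * (a + s)) ^ 2 := by rw [e1]
  have E2 : ((p - r) * (a + r * b + 2 * s)) ^ 2 = ((1 - r) * (r * b + s)) ^ 2 := by rw [e2]
  rw [xibar1, div_eq_div_iff hD.ne' (by positivity : (0:ℝ) < a + b).ne']
  have key : r * (1 - p) ^ 2 * (a + b) * (a + r * b + 2 * s) ^ 2 =
      a * (p ^ 2 * (r + 1) - 4 * p * r + r * (r + 1)) * (a + r * b + 2 * s) ^ 2 := by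
    linear_combination r * b * E1 - a * E2 - (1 - r) ^ 2 * (a - r * b) * hs2
  exact mul_right_cancel₀ (pow_ne_zero 2 hden.ne') key

theorem xibar_lipschitz (r : ℝ) (hr0 : 0 < r) (hr1 : r < 1)
    (ξ₁ ξ₂ : ℝ) (h1 : 0 < ξ₁) (h2 : 0 < ξ₂)
    (q : ℝ) (hq : q ∈ Set.Ioo r 1) :
    |xibar1 r q - ξ₁ / (ξ₁ + ξ₂)| ≤
      2 * (r + 1) ^ 2 / (r * (1 - r)) * |q - pbar r ξ₁ ξ₂| := by
  rw [← xibar1_pbar r ξ₁ ξ₂ hr0 hr1 h1 h2]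
  exact xibar1_lip r (pbar r ξ₁ ξ₂) q hr0 hr1 (pbar_mem r ξ₁ ξ₂ hr0 hr1 h1 h2) hq

end
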